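/- Let ℓ be a prime, n ≥ 1, and q ∈ (Z/ℓ^n)^× with q ≢ 1 mod ℓ^n, and let ν < n be the ℓ-adic valuation of q − 1 with ν ≥ 1. For 0 ≤ a < ν, the centralizer in GL₂(Z/ℓ^n) of the matrix M_a = [[1, ℓ^a],[0, q]] has cardinality ℓ^{2n+2a} − ℓ^{2n+2a−1}. -/
import Mathlib

lemma pow_mul_eq_zero_iff {ℓ n a : ℕ} (hℓ : ℓ.Prime) (h : a ≤ n) (z : ZMod (ℓ^n)) :
    (ℓ : ZMod (ℓ^n))^a * z = 0 ↔ ℓ^(n-a) ∣ z.val := by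
  haveI : NeZero (ℓ^n) := ⟨pow_ne_zero _ hℓ.pos.ne'⟩
  constructor
  · intro hz
    have h1 : ((ℓ^a * z.val : ℕ) : ZMod (ℓ^n)) = 0 := by
      push_cast
      rw [ZMod.natCast_zmod_val]
      exact hz
    rw [ZMod.natCast_eq_zero_iff] at h1
    have h2 : ℓ ^ a * ℓ ^ (n - a) ∣ ℓ ^ a * z.val := by
      rw [← pow_add]
      have : a + (n - a) = n := by omega
      rw [this]
      exact h1
    exact (mul_dvd_mul_iff_left (pow_ne_zero a hℓ.pos.ne')).mp h2
  · intro hz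
    obtain ⟨m, hm⟩ := hz
    have hzz : z = ((ℓ^(n-a) * m : ℕ) : ZMod (ℓ^n)) := by rw [← hm, ZMod.natCast_zmod_val]
    rw [hzz]
    push_cast
    rw [← mul_assoc, ← pow_add]
    have : a + (n - a) = n := by omega
    rw [this, ← Nat.cast_pow, ZMod.natCast_self, zero_mul]

lemma ker_card {ℓ n a : ℕ} (hℓ : ℓ.Prime) (h : a ≤ n) :
    Nat.card {z : ZMod (ℓ^n) // (ℓ : ZMod (ℓ^n))^a * z = 0} = ℓ ^ a := by
  haveI : NeZero (ℓ^n) := ⟨pow_ne_zero _ hℓ.pos.ne'⟩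
  haveI : NeZero (ℓ^a) := ⟨pow_ne_zero _ hℓ.pos.ne'⟩
  have hdvd : ℓ^(n-a) ∣ ℓ^n := pow_dvd_pow _ (by omega)
  have hf : Function.Bijective (fun t : ZMod (ℓ^a) =>
      (⟨((ℓ^(n-a) * t.val : ℕ) : ZMod (ℓ^n)), by
        rw [pow_mul_eq_zero_iff hℓ h, ZMod.val_natCast]
        exact (Nat.dvd_mod_iff hdvd).mpr ⟨t.val, rfl⟩⟩ :
        {z : ZMod (ℓ^n) // (ℓ : ZMod (ℓ^n))^a * z = 0})) := by
    constructor
    · intro t₁ t₂ hEq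
      have hv : ((ℓ^(n-a) * t₁.val : ℕ) : ZMod (ℓ^n)) = ((ℓ^(n-a) * t₂.val : ℕ) : ZMod (ℓ^n)) :=
        congrArg Subtype.val hEq
      have hlt : ∀ t : ZMod (ℓ^a), ℓ^(n-a) * t.val < ℓ^n := by
        intro t
        have := ZMod.val_lt t
        calc ℓ^(n-a) * t.val < ℓ^(n-a) * ℓ^a := by
              exact (Nat.mul_lt_mul_left (pow_pos hℓ.pos _)).mpr this
          _ = ℓ^n := by rw [← pow_add]; congr 1; omega
      have := (ZMod.natCast_eq_natCast_iff' _ _ _).mp hv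
      rw [Nat.mod_eq_of_lt (hlt t₁), Nat.mod_eq_of_lt (hlt t₂)] at this
      have := Nat.eq_of_mul_eq_mul_left (pow_pos hℓ.pos (n-a)) this
      exact ZMod.val_injective _ this
    · rintro ⟨z, hz⟩
      obtain ⟨m, hm⟩ := (pow_mul_eq_zero_iff hℓ h z).mp hz
      have hmlt : m < ℓ^a := by
        have := ZMod.val_lt z
        rw [hm] at this
        by_contra hcon
        push_neg at hcon
        have : ℓ^(n-a) * ℓ^a ≤ ℓ^(n-a) * m := Nat.mul_le_mul_left _ hcon
        rw [← pow_add] at this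
        have hna : n - a + a = n := by omega
        rw [hna] at this
        omega
      refine ⟨(m : ZMod (ℓ^a)), ?_⟩
      apply Subtype.ext
      simp only
      rw [ZMod.val_natCast, Nat.mod_eq_of_lt hmlt, ← hm, ZMod.natCast_zmod_val]
  rw [← Nat.card_congr (Equiv.ofBijective _ hf), Nat.card_eq_fintype_card, ZMod.card]

lemma isUnit_iff_pi {ℓ n : ℕ} (hℓ : ℓ.Prime) (hn : n ≠ 0) (x : ZMod (ℓ^n)) :
    IsUnit x ↔ ZMod.castHom (dvd_pow_self ℓ hn) (ZMod ℓ) x ≠ 0 := by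
  haveI : NeZero (ℓ^n) := ⟨pow_ne_zero _ hℓ.pos.ne'⟩
  have hx : x = ((x.val : ℕ) : ZMod (ℓ^n)) := (ZMod.natCast_zmod_val x).symm
  have hcast : ZMod.castHom (dvd_pow_self ℓ hn) (ZMod ℓ) x = ((x.val : ℕ) : ZMod ℓ) := by
    conv_lhs => rw [hx]
    rw [map_natCast]
  rw [hcast]
  conv_lhs => rw [hx]
  rw [ZMod.isUnit_iff_coprime]
  rw [Ne, ZMod.natCast_eq_zero_iff]
  rw [Nat.coprime_pow_right_iff (by omega), Nat.coprime_comm, hℓ.coprime_iff_not_dvd]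

noncomputable def glEquiv {R : Type*} [CommRing R] (A : Matrix (Fin 2) (Fin 2) R) :
    {g : GL (Fin 2) R // (g : Matrix (Fin 2) (Fin 2) R) * A = A * g} ≃
    {m : Matrix (Fin 2) (Fin 2) R // (m * A = A * m) ∧ IsUnit m} where
  toFun g := ⟨g.1, g.2, g.1.isUnit⟩
  invFun m := ⟨m.2.2.unit, by
    have h := m.2.2.unit_spec
    simp only [h]
    exact m.2.1⟩
  left_inv g := by
    apply Subtype.ext
    exact Units.ext g.1.isUnit.unit_spec
  right_inv m := Subtype.ext m.2.2.unit_spec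

def entriesEquiv {R : Type*} [CommRing R] (Q : Matrix (Fin 2) (Fin 2) R → Prop) :
    {m : Matrix (Fin 2) (Fin 2) R // Q m} ≃
    {p : R × R × R × R // Q !![p.1, p.2.1; p.2.2.1, p.2.2.2]} where
  toFun m := ⟨(m.1 0 0, m.1 0 1, m.1 1 0, m.1 1 1), by
    rw [← Matrix.eta_fin_two]; exact m.2⟩
  invFun p := ⟨!![p.1.1, p.1.2.1; p.1.2.2.1, p.1.2.2.2], p.2⟩
  left_inv m := Subtype.ext (Matrix.eta_fin_two m.1).symm
  right_inv p := by
    apply Subtype.ext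
    simp

/-- The cardinality of the centralizer of `M_a = [[1, ℓ^a],[0, q]]` in `GL₂(Z/ℓ^n)`
for `a < ν = ord_ℓ(q - 1)`. -/
theorem stmt9 (ℓ : ℕ) (hℓ : ℓ.Prime) (n : ℕ) (hn : 1 ≤ n)
    (q : ZMod (ℓ ^ n)) (hq : IsUnit q)
    (hq1 : ZMod.castHom (dvd_pow_self ℓ (by omega : n ≠ 0)) (ZMod ℓ) q = 1)
    (hqn : q ≠ 1) (ν : ℕ) (hν : ν = padicValNat ℓ (q - 1).val)
    (hν1 : 1 ≤ ν) (hνn : ν < n) (a : ℕ) (ha : a < ν) :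
    Nat.card {g : GL (Fin 2) (ZMod (ℓ ^ n)) //
        (g : Matrix (Fin 2) (Fin 2) (ZMod (ℓ ^ n))) *
            (!![1, (ℓ : ZMod (ℓ ^ n)) ^ a; 0, q]) =
          (!![1, (ℓ : ZMod (ℓ ^ n)) ^ a; 0, q]) *
            (g : Matrix (Fin 2) (Fin 2) (ZMod (ℓ ^ n)))} =
      ℓ ^ (2 * n + 2 * a) - ℓ ^ (2 * n + 2 * a - 1) := by
  classical
  haveI : Fact ℓ.Prime := ⟨hℓ⟩
  haveI : NeZero (ℓ ^ n) := ⟨pow_ne_zero _ hℓ.pos.ne'⟩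
  have hn0 : n ≠ 0 := by omega
  set π := ZMod.castHom (dvd_pow_self ℓ hn0) (ZMod ℓ) with hπdef
  -- the divisor c with q - 1 = ℓ^a * c and π c = 0
  have hval0 : (q - 1).val ≠ 0 := by
    intro h0
    exact hqn (sub_eq_zero.mp ((ZMod.val_eq_zero _).mp h0))
  have hdvd : ℓ^(a+1) ∣ (q-1).val :=
    dvd_trans (pow_dvd_pow ℓ (by omega)) (hν ▸ pow_padicValNat_dvd)
  obtain ⟨c₀, hc₀⟩ := hdvd
  set c : ZMod (ℓ^n) := ((ℓ * c₀ : ℕ) : ZMod (ℓ^n)) with hcdef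
  have hc : q - 1 = (ℓ : ZMod (ℓ^n))^a * c := by
    conv_lhs => rw [← ZMod.natCast_zmod_val (q-1)]
    rw [hc₀, hcdef]
    push_cast
    ring
  have hπc : π c = 0 := by
    rw [hcdef, map_natCast]
    push_cast
    rw [ZMod.natCast_self, zero_mul]
  have hπz : ∀ z : ZMod (ℓ^n), (ℓ : ZMod (ℓ^n))^a * z = 0 → π z = 0 := by
    intro z hz
    have hdv : ℓ^(n-a) ∣ z.val := (pow_mul_eq_zero_iff hℓ (by omega) z).mp hz
    have hdv1 : ℓ ∣ z.val :=
      dvd_trans (dvd_pow_self ℓ (by omega : n - a ≠ 0)) hdv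
    conv_lhs => rw [← ZMod.natCast_zmod_val z]
    rw [map_natCast, ZMod.natCast_eq_zero_iff]
    exact hdv1
  have hunit : ∀ x : ZMod (ℓ^n), IsUnit x ↔ π x ≠ 0 := fun x => isUnit_iff_pi hℓ hn0 x
  -- reduce to matrices, then to entries
  rw [Nat.card_congr (glEquiv !![1, (ℓ : ZMod (ℓ ^ n)) ^ a; 0, q])]
  rw [Nat.card_congr (entriesEquiv
    (fun m => (m * !![1, (ℓ : ZMod (ℓ ^ n)) ^ a; 0, q] =
      !![1, (ℓ : ZMod (ℓ ^ n)) ^ a; 0, q] * m) ∧ IsUnit m))]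
  -- rewrite the condition
  have hQ : ∀ x y z w : ZMod (ℓ^n),
      ((!![x,y;z,w] * !![1, (ℓ : ZMod (ℓ ^ n)) ^ a; 0, q] =
        !![1, (ℓ : ZMod (ℓ ^ n)) ^ a; 0, q] * !![x,y;z,w]) ∧ IsUnit !![x,y;z,w]) ↔
      (((ℓ : ZMod (ℓ^n))^a * z = 0 ∧
          (ℓ : ZMod (ℓ^n))^a * x + q * y = y + (ℓ : ZMod (ℓ^n))^a * w) ∧
        IsUnit (x * w - y * z)) := by
    intro x y z w
    apply and_congr
    · rw [Matrix.mul_fin_two, Matrix.mul_fin_two, ← Matrix.ext_iff]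
      simp only [Fin.forall_fin_two, Matrix.of_apply, Matrix.cons_val', Matrix.cons_val_zero,
        Matrix.empty_val', Matrix.cons_val_fin_one, Matrix.cons_val_one, Matrix.head_cons,
        Matrix.head_fin_const]
      constructor
      · rintro ⟨⟨h1, h2⟩, h3, h4⟩
        exact ⟨by linear_combination -h1, by linear_combination h2⟩
      · rintro ⟨h1, h2⟩
        exact ⟨⟨by linear_combination -h1, by linear_combination h2⟩,
          by linear_combination -c * h1 - z * hc, by linear_combination h1⟩
    · rw [Matrix.isUnit_iff_isUnit_det, Matrix.det_fin_two_of]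
  rw [Nat.card_congr (Equiv.subtypeEquivRight
    (fun p : (ZMod (ℓ^n)) × (ZMod (ℓ^n)) × (ZMod (ℓ^n)) × (ZMod (ℓ^n)) =>
      hQ p.1 p.2.1 p.2.2.1 p.2.2.2))]
  -- key facts for the parametrization
  have key1 : ∀ x y z w : ZMod (ℓ^n),
      ((ℓ : ZMod (ℓ^n))^a * z = 0 ∧
        (ℓ : ZMod (ℓ^n))^a * x + q * y = y + (ℓ : ZMod (ℓ^n))^a * w) →
      (ℓ : ZMod (ℓ^n))^a * (x - w + c * y) = 0 := by
    intro x y z w hcond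
    linear_combination hcond.2 - y * hc
  have key3 : ∀ (w y z k : ZMod (ℓ^n)), IsUnit w →
      (ℓ : ZMod (ℓ^n))^a * z = 0 → (ℓ : ZMod (ℓ^n))^a * k = 0 →
      IsUnit ((w - c * y + k) * w - y * z) := by
    intro w y z k hw hz hk
    have h1 : π ((w - c * y + k) * w - y * z) = π w * π w := by
      rw [map_sub, map_mul, map_add, map_sub, map_mul, map_mul, hπc, hπz z hz, hπz k hk]
      ring
    rw [hunit, h1]
    exact mul_ne_zero ((hunit w).mp hw) ((hunit w).mp hw)
  have key2 : ∀ x y z w : ZMod (ℓ^n),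
      (((ℓ : ZMod (ℓ^n))^a * z = 0 ∧
          (ℓ : ZMod (ℓ^n))^a * x + q * y = y + (ℓ : ZMod (ℓ^n))^a * w) ∧
        IsUnit (x * w - y * z)) → IsUnit w := by
    intro x y z w hcond
    have hk0 := key1 x y z w hcond.1
    have hx : π x = π w := by
      have := hπz _ hk0
      rw [map_add, map_sub, map_mul, hπc] at this
      linear_combination this
    have h1 : π (x * w - y * z) = π w * π w := by
      rw [map_sub, map_mul, map_mul, hπz _ hcond.1.1, hx]
      ring
    have h2 := (hunit _).mp hcond.2
    rw [h1] at h2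
    rw [hunit]
    intro h0
    exact h2 (by rw [h0, mul_zero])
  -- the parametrizing equivalence
  have E : ({w : ZMod (ℓ^n) // IsUnit w} × (ZMod (ℓ^n)) ×
      {z : ZMod (ℓ^n) // (ℓ : ZMod (ℓ^n))^a * z = 0} ×
      {k : ZMod (ℓ^n) // (ℓ : ZMod (ℓ^n))^a * k = 0}) ≃
      {p : (ZMod (ℓ^n)) × (ZMod (ℓ^n)) × (ZMod (ℓ^n)) × (ZMod (ℓ^n)) //
        (((ℓ : ZMod (ℓ^n))^a * p.2.2.1 = 0 ∧
            (ℓ : ZMod (ℓ^n))^a * p.1 + q * p.2.1 = p.2.1 + (ℓ : ZMod (ℓ^n))^a * p.2.2.2) ∧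
          IsUnit (p.1 * p.2.2.2 - p.2.1 * p.2.2.1))} :=
  { toFun := fun u => ⟨(u.1.1 - c * u.2.1 + u.2.2.2.1, u.2.1, u.2.2.1.1, u.1.1),
      ⟨⟨u.2.2.1.2, by linear_combination u.2.2.2.2 + u.2.1 * hc⟩,
        key3 u.1.1 u.2.1 u.2.2.1.1 u.2.2.2.1 u.1.2 u.2.2.1.2 u.2.2.2.2⟩⟩
    invFun := fun p => ⟨⟨p.1.2.2.2, key2 p.1.1 p.1.2.1 p.1.2.2.1 p.1.2.2.2 p.2⟩,
      p.1.2.1, ⟨p.1.2.2.1, p.2.1.1⟩,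
      ⟨p.1.1 - p.1.2.2.2 + c * p.1.2.1, key1 p.1.1 p.1.2.1 p.1.2.2.1 p.1.2.2.2 p.2.1⟩⟩
    left_inv := by
      rintro ⟨⟨w, hw⟩, y, ⟨z, hz⟩, ⟨k, hk⟩⟩
      refine Prod.ext (Subtype.ext rfl) (Prod.ext rfl (Prod.ext (Subtype.ext rfl)
        (Subtype.ext ?_)))
      show w - c * y + k - w + c * y = k
      ring
    right_inv := by
      rintro ⟨⟨x, y, z, w⟩, hp⟩
      apply Subtype.ext
      show (w - c * y + (x - w + c * y), y, z, w) = (x, y, z, w)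
      have : w - c * y + (x - w + c * y) = x := by ring
      rw [this] }
  rw [Nat.card_congr E.symm]
  rw [Nat.card_prod, Nat.card_prod, Nat.card_prod]
  have hUcard : Nat.card {w : ZMod (ℓ^n) // IsUnit w} = ℓ^(n-1) * (ℓ-1) := by
    have e : (ZMod (ℓ^n))ˣ ≃ {w : ZMod (ℓ^n) // IsUnit w} :=
      ⟨fun u => ⟨u, u.isUnit⟩, fun w => w.2.unit,
        fun u => Units.ext u.isUnit.unit_spec, fun w => Subtype.ext w.2.unit_spec⟩
    rw [← Nat.card_congr e, Nat.card_eq_fintype_card, ZMod.card_units_eq_totient,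
      Nat.totient_prime_pow hℓ (by omega)]
  rw [hUcard, ker_card hℓ (by omega),
    Nat.card_eq_fintype_card, ZMod.card]
  -- arithmetic
  have harr : ℓ^(n-1) * (ℓ-1) * (ℓ^n * (ℓ^a * ℓ^a)) = (ℓ-1) * ℓ^(2*n+2*a-1) := by
    rw [show ℓ^(n-1) * (ℓ-1) * (ℓ^n * (ℓ^a * ℓ^a)) =
      (ℓ-1) * (ℓ^(n-1) * ℓ^n * ℓ^a * ℓ^a) from by ring,
      ← pow_add, ← pow_add, ← pow_add,
      show n-1+n+a+a = 2*n+2*a-1 from by omega]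
  rw [harr, tsub_mul, one_mul]
  congr 1
  rw [← pow_succ']
  congr 1
  omega
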